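/- If σ is a unique sink orientation of a grid Γ = (M, K) with K = (κ_1, …, κ_d), then the refined index r_σ is a bijection from the vertex set V of Γ onto the product set {0, …, |κ_1|−1} × ⋯ × {0, …, |κ_d|−1}. -/
import Mathlib

open Finset
open scoped Classical


/-- `κ` is the partition of the direction set `M` of a grid into `d` blocks,
each of size at least `2`. -/
def IsGridPartition (M : Finset ℕ) {d : ℕ} (κ : Fin d → Finset ℕ) : Prop :=
  (∀ i, 2 ≤ (κ i).card) ∧
  (∀ i j, i ≠ j → Disjoint (κ i) (κ j)) ∧
  Finset.univ.biUnion κ = M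

/-- A vertex of the grid is a subset `p ⊆ M` meeting every block in exactly one element. -/
def IsGridVertex (M : Finset ℕ) {d : ℕ} (κ : Fin d → Finset ℕ) (p : Finset ℕ) : Prop :=
  p ⊆ M ∧ ∀ i, (p ∩ κ i).card = 1

/-- `σ` is an outmap: on each vertex `p` it yields a subset of `M` disjoint from `p`. -/
def IsOutmap (M : Finset ℕ) {d : ℕ} (κ : Fin d → Finset ℕ) (σ : Finset ℕ → Finset ℕ) : Prop :=
  ∀ p, IsGridVertex M κ p → σ p ⊆ M ∧ σ p ∩ p = ∅

/-- `M'` induces a (nonempty) subgrid of the grid with directions `M` and blocks `κ`. -/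
def IsSubgrid (M M' : Finset ℕ) {d : ℕ} (κ : Fin d → Finset ℕ) : Prop :=
  M' ⊆ M ∧ ∀ i, (κ i ∩ M').Nonempty

/-- A vertex of the subgrid induced by `M'`. -/
def IsSubgridVertex (M' : Finset ℕ) {d : ℕ} (κ : Fin d → Finset ℕ) (p : Finset ℕ) : Prop :=
  p ⊆ M' ∧ ∀ i, (p ∩ (κ i ∩ M')).card = 1

/-- `σ` is a unique sink orientation: every nonempty induced subgrid has exactly one
sink with respect to the restricted outmap `σ'(p) = σ(p) ∩ M'`. -/
def IsUSO (M : Finset ℕ) {d : ℕ} (κ : Fin d → Finset ℕ) (σ : Finset ℕ → Finset ℕ) : Prop :=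
  ∀ M', IsSubgrid M M' κ → ∃! p, IsSubgridVertex M' κ p ∧ σ p ∩ M' = ∅

open scoped Classical in
/-- hockey stick -/
lemma hockey (k t : ℕ) : ∑ j ∈ range k, j.choose t = k.choose (t+1) := by
  induction k with
  | zero => simp
  | succ k ih => rw [Finset.sum_range_succ, ih, Nat.choose_succ_succ, Nat.add_comm]

open scoped Classical in
lemma block_count (B : Finset ℕ) (x : ℕ) (D : Finset ℕ) (s : ℕ)
    (hx : x ∈ B) (hD : D ⊆ B) (hxD : x ∉ D) (hs : 1 ≤ s) :
    (B.powerset.filter (fun S => S.card = s ∧ x ∈ S ∧ D ∩ S = ∅)).card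
      = (B.card - 1 - D.card).choose (s - 1) := by
  have hkey : (B \ insert x D).card = B.card - 1 - D.card := by
    rw [Finset.card_sdiff_of_subset (by
      intro y hy
      rcases Finset.mem_insert.mp hy with h | h
      · exact h ▸ hx
      · exact hD h)]
    rw [Finset.card_insert_of_notMem hxD, Nat.sub_sub, Nat.add_comm]
  rw [← hkey, ← Finset.card_powersetCard]
  apply Finset.card_bij' (fun S _ => S.erase x) (fun T _ => insert x T)
  · intro S hS
    simp only [Finset.mem_filter] at hS
    exact Finset.insert_erase hS.2.2.1
  · intro T hT
    rw [Finset.mem_powersetCard] at hT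
    apply Finset.erase_insert
    intro h
    have := hT.1 h
    rw [Finset.mem_sdiff, Finset.mem_insert] at this
    exact this.2 (Or.inl rfl)
  · intro S hS
    simp only [Finset.mem_filter, Finset.mem_powerset] at hS
    obtain ⟨hSB, hcard, hxS, hDS⟩ := hS
    rw [Finset.mem_powersetCard]
    constructor
    · intro y hy
      rw [Finset.mem_erase] at hy
      rw [Finset.mem_sdiff]
      refine ⟨hSB hy.2, ?_⟩
      rw [Finset.mem_insert]
      rintro (h | h)
      · exact hy.1 h
      · exact (Finset.notMem_empty y) (hDS ▸ Finset.mem_inter.mpr ⟨h, hy.2⟩)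
    · rw [Finset.card_erase_of_mem hxS, hcard]
  · intro T hT
    rw [Finset.mem_powersetCard] at hT
    obtain ⟨hTsub, hTcard⟩ := hT
    have hxT : x ∉ T := fun h => by
      have := hTsub h
      rw [Finset.mem_sdiff, Finset.mem_insert] at this
      exact this.2 (Or.inl rfl)
    simp only [Finset.mem_filter, Finset.mem_powerset]
    refine ⟨?_, ?_, Finset.mem_insert_self x T, ?_⟩
    · intro y hy
      rcases Finset.mem_insert.mp hy with h | h
      · exact h ▸ hx
      · exact (Finset.mem_sdiff.mp (hTsub h)).1
    · rw [Finset.card_insert_of_notMem hxT, hTcard]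
      omega
    · ext y
      simp only [Finset.mem_inter, Finset.mem_insert, Finset.notMem_empty, iff_false]
      rintro ⟨hyD, (rfl | hyT)⟩
      · exact hxD hyD
      · have := hTsub hyT
        rw [Finset.mem_sdiff, Finset.mem_insert] at this
        exact this.2 (Or.inr hyD)

open scoped Classical in
lemma product_count {d : ℕ} (M : Finset ℕ) (κ : Fin d → Finset ℕ)
    (hdisj : ∀ i j : Fin d, i ≠ j → Disjoint (κ i) (κ j))
    (hcover : Finset.univ.biUnion κ = M)
    (P : Fin d → Finset ℕ → Prop) [inst : ∀ i S, Decidable (P i S)] :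
    (M.powerset.filter (fun M' => ∀ i, P i (κ i ∩ M'))).card
      = ∏ i, ((κ i).powerset.filter (P i)).card := by
  rw [← Fintype.card_piFinset]
  apply Finset.card_bij' (fun M' _ => fun i => κ i ∩ M')
    (fun g _ => Finset.univ.biUnion g)
  · -- maps to
    intro M' hM'
    simp only [Finset.mem_filter, Finset.mem_powerset] at hM'
    rw [Fintype.mem_piFinset]
    intro i
    simp only [Finset.mem_filter, Finset.mem_powerset]
    exact ⟨Finset.inter_subset_left, hM'.2 i⟩
  · -- maps from
    intro g hg
    rw [Fintype.mem_piFinset] at hg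
    simp only [Finset.mem_filter, Finset.mem_powerset]
    have hgi : ∀ i, g i ⊆ κ i := fun i a ha =>
      Finset.mem_powerset.mp (Finset.mem_filter.mp (hg i)).1 ha
    have hsub : Finset.univ.biUnion g ⊆ M := by
      intro a ha
      rcases Finset.mem_biUnion.mp ha with ⟨i, _, hi⟩
      exact hcover ▸ Finset.mem_biUnion.mpr ⟨i, Finset.mem_univ i, hgi i hi⟩
    refine ⟨hsub, fun i => ?_⟩
    have : κ i ∩ Finset.univ.biUnion g = g i := by
      ext a
      simp only [Finset.mem_inter, Finset.mem_biUnion, Finset.mem_univ, true_and]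
      constructor
      · rintro ⟨hai, j, haj⟩
        rcases eq_or_ne i j with rfl | hij
        · exact haj
        · exact absurd hai (Finset.disjoint_left.mp (hdisj j i (Ne.symm hij)) (hgi j haj))
      · intro ha
        exact ⟨hgi i ha, i, ha⟩
    rw [this]
    exact (Finset.mem_filter.mp (hg i)).2
  · -- left inverse
    intro M' hM'
    simp only [Finset.mem_filter, Finset.mem_powerset] at hM'
    ext a
    simp only [Finset.mem_biUnion, Finset.mem_univ, true_and, Finset.mem_inter]
    constructor
    · rintro ⟨i, _, ha⟩; exact ha
    · intro ha
      have : a ∈ Finset.univ.biUnion κ := hcover ▸ hM'.1 ha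
      rcases Finset.mem_biUnion.mp this with ⟨i, _, hi⟩
      exact ⟨i, hi, ha⟩
  · -- right inverse
    intro g hg
    rw [Fintype.mem_piFinset] at hg
    funext i
    have hgi : g i ⊆ κ i := fun a ha =>
      Finset.mem_powerset.mp (Finset.mem_filter.mp (hg i)).1 ha
    ext a
    simp only [Finset.mem_inter, Finset.mem_biUnion, Finset.mem_univ, true_and]
    constructor
    · rintro ⟨hai, j, haj⟩
      rcases eq_or_ne i j with rfl | hij
      · exact haj
      · have hgj : g j ⊆ κ j := fun b hb =>
          Finset.mem_powerset.mp (Finset.mem_filter.mp (hg j)).1 hb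
        exact absurd hai (Finset.disjoint_left.mp (hdisj j i (Ne.symm hij)) (hgj haj))
    · intro ha
      exact ⟨hgi ha, i, ha⟩

open scoped Classical in
lemma subgrid_vertex_is_grid_vertex {d : ℕ} {M M' : Finset ℕ} {κ : Fin d → Finset ℕ}
    {p : Finset ℕ} (hM'sub : M' ⊆ M) (hp : IsSubgridVertex M' κ p) :
    IsGridVertex M κ p := by
  refine ⟨hp.1.trans hM'sub, fun i => ?_⟩
  have h : p ∩ κ i = p ∩ (κ i ∩ M') := by
    ext a
    simp only [Finset.mem_inter]
    exact ⟨fun ⟨h1, h2⟩ => ⟨h1, h2, hp.1 h1⟩, fun ⟨h1, h2, _⟩ => ⟨h1, h2⟩⟩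
  rw [h]
  exact hp.2 i

open scoped Classical in
lemma master {d : ℕ} (M : Finset ℕ) (κ : Fin d → Finset ℕ) (σ : Finset ℕ → Finset ℕ)
    (hκ : IsGridPartition M κ) (hσ : IsOutmap M κ σ) (huso : IsUSO M κ σ)
    (s : Fin d → ℕ) (hs1 : ∀ i, 1 ≤ s i) (hs2 : ∀ i, s i ≤ (κ i).card) :
    ∑ p ∈ M.powerset.filter (fun p => IsGridVertex M κ p),
        ∏ i, ((κ i).card - 1 - (σ p ∩ κ i).card).choose (s i - 1)
      = ∏ i, ((κ i).card).choose (s i) := by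
  obtain ⟨hk2, hdisj, hcover⟩ := hκ
  set V := M.powerset.filter (fun p => IsGridVertex M κ p) with hV
  set SG := M.powerset.filter (fun M' => ∀ i, (κ i ∩ M').card = s i) with hSG
  have hmemV : ∀ p, p ∈ V ↔ IsGridVertex M κ p := by
    intro p
    simp only [hV, Finset.mem_filter, Finset.mem_powerset, and_iff_right_iff_imp]
    exact fun h => h.1
  -- Step C: for each vertex p, the number of subgrids in SG in which p is the sink
  have stepC : ∀ p ∈ V,
      (SG.filter (fun M' => IsSubgridVertex M' κ p ∧ σ p ∩ M' = ∅)).card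
        = ∏ i, ((κ i).card - 1 - (σ p ∩ κ i).card).choose (s i - 1) := by
    intro p hp
    rw [hmemV] at hp
    have hpM := hp.1
    have hσp := hσ p hp
    have hstep : SG.filter (fun M' => IsSubgridVertex M' κ p ∧ σ p ∩ M' = ∅)
        = M.powerset.filter (fun M' => ∀ i,
            (κ i ∩ M').card = s i ∧ p ∩ κ i ⊆ κ i ∩ M' ∧ (σ p ∩ κ i) ∩ (κ i ∩ M') = ∅) := by
      rw [hSG, Finset.filter_filter]
      apply Finset.filter_congr
      intro M' hM'
      rw [Finset.mem_powerset] at hM'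
      constructor
      · rintro ⟨hcards, ⟨hpsub, _⟩, hsink⟩ i
        refine ⟨hcards i, ?_, ?_⟩
        · intro a ha
          rw [Finset.mem_inter] at ha ⊢
          exact ⟨ha.2, hpsub ha.1⟩
        · apply Finset.eq_empty_of_forall_notMem
          intro a ha
          simp only [Finset.mem_inter] at ha
          have : a ∈ σ p ∩ M' := Finset.mem_inter.mpr ⟨ha.1.1, ha.2.2⟩
          rw [hsink] at this
          exact Finset.notMem_empty a this
      · intro h
        have hpsub : p ⊆ M' := by
          intro a ha
          have haM : a ∈ Finset.univ.biUnion κ := hcover ▸ hpM ha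
          rcases Finset.mem_biUnion.mp haM with ⟨i, _, hi⟩
          have : a ∈ κ i ∩ M' := (h i).2.1 (Finset.mem_inter.mpr ⟨ha, hi⟩)
          exact (Finset.mem_inter.mp this).2
        refine ⟨fun i => (h i).1, ⟨hpsub, fun i => ?_⟩, ?_⟩
        · have : p ∩ (κ i ∩ M') = p ∩ κ i := by
            ext a
            simp only [Finset.mem_inter]
            exact ⟨fun ⟨h1, h2, _⟩ => ⟨h1, h2⟩, fun ⟨h1, h2⟩ => ⟨h1, h2, hpsub h1⟩⟩
          rw [this]
          exact hp.2 i
        · apply Finset.eq_empty_of_forall_notMem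
          intro a ha
          rw [Finset.mem_inter] at ha
          have haM : a ∈ Finset.univ.biUnion κ := hcover ▸ hσp.1 ha.1
          rcases Finset.mem_biUnion.mp haM with ⟨i, _, hi⟩
          have : a ∈ (σ p ∩ κ i) ∩ (κ i ∩ M') :=
            Finset.mem_inter.mpr ⟨Finset.mem_inter.mpr ⟨ha.1, hi⟩,
              Finset.mem_inter.mpr ⟨hi, ha.2⟩⟩
          rw [(h i).2.2] at this
          exact Finset.notMem_empty a this
    rw [hstep]
    refine (product_count M κ hdisj hcover (fun i S =>
      S.card = s i ∧ p ∩ κ i ⊆ S ∧ (σ p ∩ κ i) ∩ S = ∅)).trans ?_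
    apply Finset.prod_congr rfl
    intro i _
    obtain ⟨x, hx⟩ := Finset.card_eq_one.mp (hp.2 i)
    have hxp : x ∈ p := (Finset.mem_inter.mp (hx ▸ Finset.mem_singleton_self x)).1
    have hxκ : x ∈ κ i := (Finset.mem_inter.mp (hx ▸ Finset.mem_singleton_self x)).2
    have hxD : x ∉ σ p ∩ κ i := by
      intro h
      have : x ∈ σ p ∩ p := Finset.mem_inter.mpr ⟨(Finset.mem_inter.mp h).1, hxp⟩
      rw [hσp.2] at this
      exact Finset.notMem_empty x this
    have hfe : (κ i).powerset.filter (fun S =>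
          (S.card = s i ∧ p ∩ κ i ⊆ S ∧ (σ p ∩ κ i) ∩ S = ∅))
        = (κ i).powerset.filter (fun S =>
          (S.card = s i ∧ x ∈ S ∧ (σ p ∩ κ i) ∩ S = ∅)) := by
      apply Finset.filter_congr
      intro S _
      rw [hx, Finset.singleton_subset_iff]
    rw [hfe, block_count (κ i) x (σ p ∩ κ i) (s i) hxκ Finset.inter_subset_right hxD (hs1 i)]
  -- Step A: every subgrid in SG has exactly one sink among grid vertices
  have stepA : ∀ M' ∈ SG,
      (V.filter (fun p => IsSubgridVertex M' κ p ∧ σ p ∩ M' = ∅)).card = 1 := by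
    intro M' hM'
    simp only [hSG, Finset.mem_filter, Finset.mem_powerset] at hM'
    have hsub : IsSubgrid M M' κ := by
      refine ⟨hM'.1, fun i => ?_⟩
      rw [← Finset.card_pos, hM'.2 i]
      exact hs1 i
    obtain ⟨q, hq, huniq⟩ := huso M' hsub
    have hqV : q ∈ V := by
      rw [hmemV]
      exact subgrid_vertex_is_grid_vertex hM'.1 hq.1
    have : V.filter (fun p => IsSubgridVertex M' κ p ∧ σ p ∩ M' = ∅) = {q} := by
      ext p
      simp only [Finset.mem_filter, Finset.mem_singleton]
      constructor
      · rintro ⟨_, hsink⟩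
        exact huniq p hsink
      · rintro rfl
        exact ⟨hqV, hq⟩
    rw [this, Finset.card_singleton]
  -- Step B: double counting
  have stepB : ∑ p ∈ V, (SG.filter (fun M' => IsSubgridVertex M' κ p ∧ σ p ∩ M' = ∅)).card
      = ∑ M' ∈ SG, (V.filter (fun p => IsSubgridVertex M' κ p ∧ σ p ∩ M' = ∅)).card := by
    simp only [Finset.card_filter]
    exact Finset.sum_comm
  -- SG count
  have sgcard : SG.card = ∏ i, ((κ i).card).choose (s i) := by
    rw [hSG]
    refine (product_count M κ hdisj hcover (fun i S => S.card = s i)).trans ?_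
    apply Finset.prod_congr rfl
    intro i _
    rw [← Finset.powersetCard_eq_filter, Finset.card_powersetCard]
  calc ∑ p ∈ V, ∏ i, ((κ i).card - 1 - (σ p ∩ κ i).card).choose (s i - 1)
      = ∑ p ∈ V, (SG.filter (fun M' => IsSubgridVertex M' κ p ∧ σ p ∩ M' = ∅)).card := by
        exact (Finset.sum_congr rfl (fun p hp => (stepC p hp).symm))
    _ = ∑ M' ∈ SG, (V.filter (fun p => IsSubgridVertex M' κ p ∧ σ p ∩ M' = ∅)).card := stepB
    _ = ∑ M' ∈ SG, 1 := Finset.sum_congr rfl stepA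
    _ = SG.card := by rw [Finset.sum_const, Nat.smul_one_eq_cast, Nat.cast_id]
    _ = ∏ i, ((κ i).card).choose (s i) := sgcard

open scoped Classical in
lemma vertex_refined_lt {d : ℕ} {M : Finset ℕ} {κ : Fin d → Finset ℕ}
    {σ : Finset ℕ → Finset ℕ} {p : Finset ℕ}
    (hk2 : ∀ i, 2 ≤ (κ i).card) (hσ : IsOutmap M κ σ) (hp : IsGridVertex M κ p)
    (i : Fin d) : (σ p ∩ κ i).card < (κ i).card := by
  obtain ⟨x, hx⟩ := Finset.card_eq_one.mp (hp.2 i)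
  have hxp : x ∈ p := (Finset.mem_inter.mp (hx ▸ Finset.mem_singleton_self x)).1
  have hxκ : x ∈ κ i := (Finset.mem_inter.mp (hx ▸ Finset.mem_singleton_self x)).2
  have hsub : σ p ∩ κ i ⊆ (κ i).erase x := by
    intro a ha
    rw [Finset.mem_inter] at ha
    rw [Finset.mem_erase]
    refine ⟨fun h => ?_, ha.2⟩
    have : a ∈ σ p ∩ p := Finset.mem_inter.mpr ⟨ha.1, h ▸ hxp⟩
    rw [(hσ p hp).2] at this
    exact Finset.notMem_empty a this
  calc (σ p ∩ κ i).card ≤ ((κ i).erase x).card := Finset.card_le_card hsub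
    _ = (κ i).card - 1 := Finset.card_erase_of_mem hxκ
    _ < (κ i).card := by have := hk2 i; omega

/-- If `σ` is a unique sink orientation of the grid `(M, κ)`, then the refined index
`r_σ(p) = (|σ(p) ∩ κ_1|, …, |σ(p) ∩ κ_d|)` is a bijection from the vertex set onto
`{0, …, |κ_1|−1} × ⋯ × {0, …, |κ_d|−1}`. -/
theorem refinedIndex_bijective
    (M : Finset ℕ) (d : ℕ) (hd : 0 < d) (κ : Fin d → Finset ℕ)
    (hκ : IsGridPartition M κ)
    (σ : Finset ℕ → Finset ℕ) (hσ : IsOutmap M κ σ)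
    (huso : IsUSO M κ σ) :
    Set.BijOn (fun p => fun i => (σ p ∩ κ i).card)
      {p | IsGridVertex M κ p}
      {f : Fin d → ℕ | ∀ i, f i < (κ i).card} := by
  obtain ⟨hk2, hdisj, hcover⟩ := hκ
  set V := M.powerset.filter (fun p => IsGridVertex M κ p) with hV
  have hmemV : ∀ p, p ∈ V ↔ IsGridVertex M κ p := by
    intro p
    simp only [hV, Finset.mem_filter, Finset.mem_powerset, and_iff_right_iff_imp]
    exact fun h => h.1
  set Box := Fintype.piFinset (fun i => Finset.range (κ i).card) with hBox
  have hmemBox : ∀ f : Fin d → ℕ, f ∈ Box ↔ ∀ i, f i < (κ i).card := by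
    intro f
    simp only [hBox, Fintype.mem_piFinset, Finset.mem_range]
  have hmaps : ∀ p ∈ V, (fun i => (σ p ∩ κ i).card) ∈ Box := by
    intro p hp
    rw [hmemBox]
    exact fun i => vertex_refined_lt hk2 hσ ((hmemV p).mp hp) i
  set N : (Fin d → ℕ) → ℕ :=
    fun b => (V.filter (fun p => (fun i => (σ p ∩ κ i).card) = b)).card with hN
  -- grouped master identity
  have master' : ∀ a ∈ Box,
      ∑ b ∈ Box, N b * ∏ i, ((κ i).card - 1 - b i).choose ((κ i).card - 1 - a i)
        = ∑ b ∈ Box, ∏ i, ((κ i).card - 1 - b i).choose ((κ i).card - 1 - a i) := by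
    intro a ha
    rw [hmemBox] at ha
    have hs1 : ∀ i, 1 ≤ (κ i).card - a i := fun i => by have := ha i; omega
    have hs2 : ∀ i, (κ i).card - a i ≤ (κ i).card := fun i => Nat.sub_le _ _
    have hmm : ∑ p ∈ M.powerset.filter (fun p => IsGridVertex M κ p),
          ∏ i, ((κ i).card - 1 - (σ p ∩ κ i).card).choose (((κ i).card - a i) - 1)
        = ∏ i, ((κ i).card).choose ((κ i).card - a i) :=
      master M κ σ ⟨hk2, hdisj, hcover⟩ hσ huso (fun i => (κ i).card - a i) hs1 hs2
    -- LHS grouping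
    have hgroup : ∑ b ∈ Box, N b * ∏ i, ((κ i).card - 1 - b i).choose ((κ i).card - 1 - a i)
        = ∑ p ∈ V, ∏ i, ((κ i).card - 1 - (σ p ∩ κ i).card).choose ((κ i).card - 1 - a i) := by
      rw [← Finset.sum_fiberwise_of_maps_to hmaps
        (fun p => ∏ i, ((κ i).card - 1 - (σ p ∩ κ i).card).choose ((κ i).card - 1 - a i))]
      apply Finset.sum_congr rfl
      intro b _
      show (V.filter (fun p => (fun i => (σ p ∩ κ i).card) = b)).card * _ = _
      rw [Finset.card_eq_sum_ones, Finset.sum_mul, one_mul]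
      apply Finset.sum_congr rfl
      intro p hp
      have : (fun i => (σ p ∩ κ i).card) = b := (Finset.mem_filter.mp hp).2
      apply Finset.prod_congr rfl
      intro i _
      rw [← congrFun this i]
    -- RHS: uniform sum equals product of binomials
    have huniform : ∑ b ∈ Box, ∏ i, ((κ i).card - 1 - b i).choose ((κ i).card - 1 - a i)
        = ∏ i, ((κ i).card).choose ((κ i).card - a i) := by
      have h1 : ∑ b ∈ Box, ∏ i, ((κ i).card - 1 - b i).choose ((κ i).card - 1 - a i)
          = ∏ i, ∑ v ∈ Finset.range (κ i).card,
              ((κ i).card - 1 - v).choose ((κ i).card - 1 - a i) := by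
        rw [hBox]
        exact (Finset.prod_univ_sum (fun i => Finset.range (κ i).card)
          (fun i v => ((κ i).card - 1 - v).choose ((κ i).card - 1 - a i))).symm
      rw [h1]
      apply Finset.prod_congr rfl
      intro i _
      have hrefl := Finset.sum_range_reflect
        (fun j => j.choose ((κ i).card - 1 - a i)) ((κ i).card)
      rw [hrefl, hockey]
      have harg : (κ i).card - 1 - a i + 1 = (κ i).card - a i := by
        have h' := ha i
        clear * - h'
        omega
      rw [harg]
    rw [hgroup, huniform]
    have : ∀ p ∈ V, ∏ i, ((κ i).card - 1 - (σ p ∩ κ i).card).choose ((κ i).card - 1 - a i)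
        = ∏ i, ((κ i).card - 1 - (σ p ∩ κ i).card).choose (((κ i).card - a i) - 1) := by
      intro p _
      apply Finset.prod_congr rfl
      intro i _
      have he : (κ i).card - a i - 1 = (κ i).card - 1 - a i := by
        clear * -
        omega
      rw [he]
    rw [Finset.sum_congr rfl this, hmm]
  -- Triangular system: N a = 1 for all a in Box
  have hNone : ∀ n a, a ∈ Box → (∑ i, a i) = n → N a = 1 := by
    intro n
    induction n using Nat.strong_induction_on with
    | _ n ih =>
      intro a ha hsum
      have key := master' a ha
      rw [← Finset.add_sum_erase _ _ ha, ← Finset.add_sum_erase _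
        (fun b => ∏ i, ((κ i).card - 1 - b i).choose ((κ i).card - 1 - a i)) ha] at key
      have hcaa : ∏ i, ((κ i).card - 1 - a i).choose ((κ i).card - 1 - a i) = 1 := by
        apply Finset.prod_eq_one
        intro i _
        exact Nat.choose_self _
      rw [hcaa, mul_one] at key
      have hterm : ∀ b ∈ Box.erase a,
          N b * ∏ i, ((κ i).card - 1 - b i).choose ((κ i).card - 1 - a i)
            = ∏ i, ((κ i).card - 1 - b i).choose ((κ i).card - 1 - a i) := by
        intro b hb
        obtain ⟨hba, hbBox⟩ := Finset.mem_erase.mp hb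
        by_cases hc : ∏ i, ((κ i).card - 1 - b i).choose ((κ i).card - 1 - a i) = 0
        · rw [hc, Nat.mul_zero]
        · have hble : ∀ i, b i ≤ a i := by
            intro i
            by_contra hlt
            push_neg at hlt
            have hbi := (hmemBox b).mp hbBox i
            have h1 : (κ i).card - 1 - b i < (κ i).card - 1 - a i :=
              Nat.sub_lt_sub_left
                (Nat.lt_of_lt_of_le hlt (Nat.le_pred_of_lt hbi)) hlt
            exact hc (Finset.prod_eq_zero (Finset.mem_univ i)
              (Nat.choose_eq_zero_of_lt h1))
          have hstrict : ∑ i, b i < ∑ i, a i := by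
            apply Finset.sum_lt_sum (fun i _ => hble i)
            by_contra hno
            push_neg at hno
            apply hba
            funext i
            exact le_antisymm (hble i) (hno i (Finset.mem_univ i))
          rw [ih (∑ i, b i) (hsum ▸ hstrict) b hbBox rfl, one_mul]
      rw [Finset.sum_congr rfl hterm] at key
      exact Nat.add_right_cancel key
  -- Conclusion
  refine ⟨?_, ?_, ?_⟩
  · intro p hp
    simp only [Set.mem_setOf_eq] at hp ⊢
    exact fun i => vertex_refined_lt hk2 hσ hp i
  · intro p hp q hq heq
    simp only [Set.mem_setOf_eq] at hp hq
    have hpV : p ∈ V := (hmemV p).mpr hp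
    have hqV : q ∈ V := (hmemV q).mpr hq
    set b := fun i => (σ p ∩ κ i).card with hb
    have hbBox : b ∈ Box := hmaps p hpV
    have hNb := hNone (∑ i, b i) b hbBox rfl
    have hcard : (V.filter (fun x => (fun i => (σ x ∩ κ i).card) = b)).card ≤ 1 := le_of_eq hNb
    have hpmem : p ∈ V.filter (fun x => (fun i => (σ x ∩ κ i).card) = b) :=
      Finset.mem_filter.mpr ⟨hpV, rfl⟩
    have hqmem : q ∈ V.filter (fun x => (fun i => (σ x ∩ κ i).card) = b) :=
      Finset.mem_filter.mpr ⟨hqV, heq.symm⟩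
    exact (Finset.card_le_one.mp hcard q hqmem p hpmem).symm
  · intro f hf
    simp only [Set.mem_setOf_eq] at hf
    have hfBox : f ∈ Box := (hmemBox f).mpr hf
    have hNf := hNone (∑ i, f i) f hfBox rfl
    have hpos : 0 < (V.filter (fun x => (fun i => (σ x ∩ κ i).card) = f)).card :=
      lt_of_lt_of_eq Nat.one_pos hNf.symm
    obtain ⟨p, hp⟩ := Finset.card_pos.mp hpos
    obtain ⟨hpV, hpf⟩ := Finset.mem_filter.mp hp
    exact ⟨p, (hmemV p).mp hpV, hpf⟩
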